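/- For real x, the upper boundary values of the imaginary part of φ′(z) = Log[(√(bz−1)+√(az−1))/(√(bz−1)−√(az−1))] satisfy: lim_{ε→0⁺} Im φ′(x+iε) = π if 0 < x < a; lim_{ε→0⁺} Im φ′(x+iε) = 2·arctan√((1−ax)/(bx−1)) if a < x < b; and lim_{ε→0⁺} Im φ′(x+iε) = 0 if x > b. The lower boundary values satisfy lim_{ε→0⁺} Im φ′(x−iε) = −lim_{ε→0⁺} Im φ′(x+iε) in each of the three cases. -/

import Mathlib

open Complex Finset Filter Topology

/-- `a := (1−√c)/(1+√c)`. -/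
noncomputable def aconst (c : ℝ) : ℝ := (1 - Real.sqrt c) / (1 + Real.sqrt c)

/-- `b := (1+√c)/(1−√c)`. -/
noncomputable def bconst (c : ℝ) : ℝ := (1 + Real.sqrt c) / (1 - Real.sqrt c)

/-- The principal branch of the complex square root. -/
noncomputable def csqrt (z : ℂ) : ℂ := z ^ (1 / 2 : ℂ)

/-- The function `φ(z)`, defined using principal branches. -/
noncomputable def phiFun (c : ℝ) (z : ℂ) : ℂ :=
  z * Complex.log ((csqrt ((bconst c : ℂ) * z - 1) + csqrt ((aconst c : ℂ) * z - 1)) /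
      (csqrt ((bconst c : ℂ) * z - 1) - csqrt ((aconst c : ℂ) * z - 1))) -
  Complex.log ((csqrt (z - (aconst c : ℂ)) + csqrt (z - (bconst c : ℂ))) /
      (csqrt (z - (aconst c : ℂ)) - csqrt (z - (bconst c : ℂ))))

/-- The function `φ̃(z)`, defined using principal branches. -/
noncomputable def phiTilde (c : ℝ) (z : ℂ) : ℂ :=
  z * Complex.log ((csqrt (1 - (aconst c : ℂ) * z) + csqrt (1 - (bconst c : ℂ) * z)) /
      (csqrt (1 - (aconst c : ℂ) * z) - csqrt (1 - (bconst c : ℂ) * z))) -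
  Complex.log ((csqrt ((bconst c : ℂ) - z) + csqrt ((aconst c : ℂ) - z)) /
      (csqrt ((bconst c : ℂ) - z) - csqrt ((aconst c : ℂ) - z)))

/-- The domain `ℂ ∖ (−∞, b]` of `φ`. -/
def phiDom (c : ℝ) : Set ℂ := {z : ℂ | ¬(z.im = 0 ∧ z.re ≤ bconst c)}

/-- The domain `ℂ ∖ ((−∞, 0] ∪ [a, ∞))` of `φ̃`. -/
def phiTildeDom (c : ℝ) : Set ℂ := {z : ℂ | ¬(z.im = 0 ∧ (z.re ≤ 0 ∨ aconst c ≤ z.re))}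

/-- The function `φ′(z) = Log[(√(bz−1)+√(az−1))/(√(bz−1)−√(az−1))]`. -/
noncomputable def phiDeriv (c : ℝ) (z : ℂ) : ℂ :=
  Complex.log ((csqrt ((bconst c : ℂ) * z - 1) + csqrt ((aconst c : ℂ) * z - 1)) /
      (csqrt ((bconst c : ℂ) * z - 1) - csqrt ((aconst c : ℂ) * z - 1)))

namespace PhiAux

/-- Polar form of the principal square root. -/
lemma csqrt_polar {w : ℂ} (hw : w ≠ 0) :
    csqrt w = (Real.sqrt ‖w‖ : ℂ) * Complex.exp ((w.arg / 2 : ℝ) * I) := by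
  have habs : 0 < ‖w‖ := norm_pos_iff.mpr hw
  have hsq : (Real.sqrt ‖w‖ : ℂ) = Complex.exp ((Real.log ‖w‖ / 2 : ℝ)) := by
    rw [← Complex.ofReal_exp]
    congr 1
    rw [← Real.log_sqrt habs.le, Real.exp_log (Real.sqrt_pos.mpr habs)]
  rw [csqrt, Complex.cpow_def_of_ne_zero hw, hsq, ← Complex.exp_add]
  congr 1
  rw [Complex.log]
  push_cast
  ring

lemma arg_mem_Ioo {w : ℂ} (hw : 0 < w.im) : w.arg ∈ Set.Ioo 0 Real.pi := by
  constructor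
  · rcases (Complex.arg_nonneg_iff.mpr hw.le).lt_or_eq with h | h
    · exact h
    · exfalso
      have := (Complex.arg_eq_zero_iff.mp h.symm).2
      linarith
  · exact Complex.arg_lt_pi_iff.mpr (Or.inr hw.ne')

/-- `Im (w₁ * conj w₂) = |w₁| * |w₂| * sin (arg w₁ - arg w₂)`. -/
lemma im_mul_conj (w₁ w₂ : ℂ) :
    (w₁ * (starRingEnd ℂ) w₂).im
      = ‖w₁‖ * ‖w₂‖ * Real.sin (w₁.arg - w₂.arg) := by
  simp [Complex.mul_im, Complex.sin_arg, Complex.cos_arg, Real.sin_sub,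
    Complex.sin_arg]
  rcases eq_or_ne w₁ 0 with rfl | h1
  · simp
  rcases eq_or_ne w₂ 0 with rfl | h2
  · simp
  rw [Complex.cos_arg h1, Complex.cos_arg h2]
  have a1 : ‖w₁‖ ≠ 0 := norm_ne_zero_iff.mpr h1
  have a2 : ‖w₂‖ ≠ 0 := norm_ne_zero_iff.mpr h2
  field_simp
  ring


lemma im_csqrt_mul_conj_pos {w₁ w₂ : ℂ} (h1 : 0 < w₁.im) (h2 : 0 < w₂.im)
    (h : 0 < (w₁ * (starRingEnd ℂ) w₂).im) :
    0 < (csqrt w₁ * (starRingEnd ℂ) (csqrt w₂)).im := by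
  have hne1 : w₁ ≠ 0 := fun h0 => by simp [h0] at h1
  have hne2 : w₂ ≠ 0 := fun h0 => by simp [h0] at h2
  have ha1 := arg_mem_Ioo h1
  have ha2 := arg_mem_Ioo h2
  have hb1 : 0 < ‖w₁‖ := norm_pos_iff.mpr hne1
  have hb2 : 0 < ‖w₂‖ := norm_pos_iff.mpr hne2
  have hsin : 0 < Real.sin (w₁.arg - w₂.arg) := by
    rw [im_mul_conj] at h
    nlinarith [mul_pos hb1 hb2]
  have hd : w₁.arg - w₂.arg ∈ Set.Ioo 0 Real.pi := by
    constructor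
    · by_contra hle
      push_neg at hle
      have : Real.sin (w₁.arg - w₂.arg) ≤ 0 :=
        Real.sin_nonpos_of_nonpos_of_neg_pi_le hle (by linarith [ha1.1, ha2.2])
      linarith
    · linarith [ha1.2, ha2.1]
  have e : (csqrt w₁ * (starRingEnd ℂ) (csqrt w₂)).im
      = Real.sqrt ‖w₁‖ * Real.sqrt ‖w₂‖
        * Real.sin (w₁.arg / 2 - w₂.arg / 2) := by
    rw [csqrt_polar hne1, csqrt_polar hne2, map_mul, Complex.conj_ofReal,
      ← Complex.exp_conj, map_mul, Complex.conj_I, Complex.conj_ofReal]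
    have hE : Complex.exp (((w₁.arg / 2 : ℝ) : ℂ) * I)
        * (((w₂.arg / 2 : ℝ) : ℂ) * -I).exp
        = Complex.exp (((w₁.arg / 2 - w₂.arg / 2 : ℝ) : ℂ) * I) := by
      rw [← Complex.exp_add]
      congr 1
      push_cast
      ring
    rw [mul_mul_mul_comm, hE]
    simp only [Complex.mul_im, Complex.mul_re, Complex.ofReal_re, Complex.ofReal_im,
      Complex.exp_ofReal_mul_I_re, Complex.exp_ofReal_mul_I_im]
    ring
  rw [e]
  have : 0 < Real.sin (w₁.arg / 2 - w₂.arg / 2) :=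
    Real.sin_pos_of_pos_of_lt_pi (by linarith [hd.1]) (by linarith [hd.2, Real.pi_pos])
  positivity

lemma div_im_pos {U V : ℂ} (h : 0 < (V * (starRingEnd ℂ) U).im) :
    0 < ((U + V) / (U - V)).im ∧ U ≠ V := by
  have hUV : U ≠ V := by
    rintro rfl
    rw [Complex.mul_conj] at h
    simp at h
  have hd : U - V ≠ 0 := sub_ne_zero.mpr hUV
  have hnsq : 0 < Complex.normSq (U - V) := Complex.normSq_pos.mpr hd
  refine ⟨?_, hUV⟩
  have key : (U + V).im * (U - V).re - (U + V).re * (U - V).im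
      = 2 * (V * (starRingEnd ℂ) U).im := by
    simp [Complex.mul_im]
    ring
  rw [Complex.div_im, div_sub_div_same]
  exact div_pos (by linarith) hnsq

lemma ratio_im_pos {a b : ℝ} (ha : 0 < a) (hab : a < b) {z : ℂ} (hz : 0 < z.im) :
    0 < ((csqrt ((b : ℂ) * z - 1) + csqrt ((a : ℂ) * z - 1)) /
        (csqrt ((b : ℂ) * z - 1) - csqrt ((a : ℂ) * z - 1))).im ∧
      csqrt ((b : ℂ) * z - 1) ≠ csqrt ((a : ℂ) * z - 1) := by
  have h1 : 0 < ((a : ℂ) * z - 1).im := by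
    simp [Complex.mul_im]
    positivity
  have h2 : 0 < ((b : ℂ) * z - 1).im := by
    simp [Complex.mul_im]
    have : 0 < b := ha.trans hab
    positivity
  have hprod : 0 < (((a : ℂ) * z - 1) * (starRingEnd ℂ) ((b : ℂ) * z - 1)).im := by
    have e : (((a : ℂ) * z - 1) * (starRingEnd ℂ) ((b : ℂ) * z - 1)).im
        = (b - a) * z.im := by
      simp [Complex.mul_im, Complex.mul_re]
      ring
    rw [e]
    have : 0 < b - a := by linarith
    positivity
  exact div_im_pos (im_csqrt_mul_conj_pos h1 h2 hprod)

lemma tendsto_path {r s : ℝ} :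
    Tendsto (fun ε : ℝ => (r : ℂ) + ((s * ε : ℝ) : ℂ) * I) (𝓝[>] 0) (𝓝 (r : ℂ)) := by
  have hc : Continuous fun ε : ℝ => (r : ℂ) + ((s * ε : ℝ) : ℂ) * I := by
    continuity
  have h := hc.tendsto 0
  simp only [mul_zero, Complex.ofReal_zero, zero_mul, add_zero] at h
  exact h.mono_left nhdsWithin_le_nhds

lemma csqrt_ofReal {r : ℝ} (hr : 0 ≤ r) : csqrt (r : ℂ) = ((Real.sqrt r : ℝ) : ℂ) := by
  rw [csqrt, Real.sqrt_eq_rpow, Complex.ofReal_cpow hr]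
  norm_num

lemma tendsto_csqrt_pos {r : ℝ} (hr : 0 < r) (s : ℝ) :
    Tendsto (fun ε : ℝ => csqrt ((r : ℂ) + ((s * ε : ℝ) : ℂ) * I)) (𝓝[>] 0)
      (𝓝 ((Real.sqrt r : ℝ) : ℂ)) := by
  have hc : ContinuousAt (fun w : ℂ => csqrt w) (r : ℂ) := by
    have : ((r : ℂ)) ∈ Complex.slitPlane := by
      rw [Complex.mem_slitPlane_iff]
      left
      simpa using hr
    exact continuousAt_cpow_const this
  have := hc.tendsto.comp (tendsto_path (r := r) (s := s))
  rwa [csqrt_ofReal hr.le] at this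

lemma tendsto_csqrt_neg {r s : ℝ} (hr : r < 0) (hs : 0 < s) :
    Tendsto (fun ε : ℝ => csqrt ((r : ℂ) + ((s * ε : ℝ) : ℂ) * I)) (𝓝[>] 0)
      (𝓝 (((Real.sqrt (-r) : ℝ) : ℂ) * I)) := by
  set w : ℝ → ℂ := fun ε => (r : ℂ) + ((s * ε : ℝ) : ℂ) * I with hwdef
  have him : ∀ᶠ ε in 𝓝[>] (0 : ℝ), 0 < (w ε).im := by
    filter_upwards [self_mem_nhdsWithin] with ε (hε : 0 < ε)
    simp [hwdef]
    positivity
  have harg : Tendsto (fun ε => (w ε).arg) (𝓝[>] (0 : ℝ)) (𝓝 Real.pi) := by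
    refine (Complex.tendsto_arg_nhdsWithin_im_nonneg_of_re_neg_of_im_zero
      (z := (r : ℂ)) (by simpa using hr) (by simp)).comp ?_
    rw [tendsto_nhdsWithin_iff]
    exact ⟨tendsto_path, him.mono fun ε h => le_of_lt h⟩
  have habs : Tendsto (fun ε => ‖w ε‖) (𝓝[>] (0 : ℝ)) (𝓝 (-r)) := by
    have h := (continuous_norm.tendsto (r : ℂ)).comp (tendsto_path (r := r) (s := s))
    have e : ‖(r : ℂ)‖ = -r := by
      simp [abs_of_neg hr]
    rw [e] at h
    exact h
  have h1 : Tendsto (fun ε => ((Real.sqrt ‖w ε‖ : ℝ) : ℂ)) (𝓝[>] (0 : ℝ))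
      (𝓝 ((Real.sqrt (-r) : ℝ) : ℂ)) :=
    (Complex.continuous_ofReal.tendsto _).comp ((Real.continuous_sqrt.tendsto _).comp habs)
  have h2 : Tendsto (fun ε => Complex.exp ((((w ε).arg / 2 : ℝ) : ℂ) * I)) (𝓝[>] (0 : ℝ))
      (𝓝 (Complex.exp (((Real.pi / 2 : ℝ) : ℂ) * I))) := by
    refine (Complex.continuous_exp.tendsto _).comp ?_
    exact ((Complex.continuous_ofReal.tendsto _).comp (harg.div_const 2)).mul_const I
  have hmain := h1.mul h2
  have hexp : Complex.exp (((Real.pi / 2 : ℝ) : ℂ) * I) = I := by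
    rw [Complex.exp_mul_I]
    rw [← Complex.ofReal_cos, ← Complex.ofReal_sin, Real.cos_pi_div_two, Real.sin_pi_div_two]
    simp
  rw [hexp] at hmain
  refine hmain.congr' ?_
  filter_upwards [him] with ε h
  have : w ε ≠ 0 := fun h0 => by simp [h0] at h
  rw [csqrt_polar this]

lemma conj_csqrt {w : ℂ} (hw : w.im ≠ 0) :
    csqrt ((starRingEnd ℂ) w) = (starRingEnd ℂ) (csqrt w) := by
  have harg : w.arg ≠ Real.pi := fun h => hw (Complex.arg_eq_pi_iff.mp h).2
  have h := Complex.conj_cpow w (1 / 2 : ℂ) harg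
  have hhalf : (starRingEnd ℂ) (1 / 2 : ℂ) = (1 / 2 : ℂ) := by
    rw [map_div₀, map_one, map_ofNat]
  rw [csqrt, csqrt, h, hhalf]

lemma ratio_conj {a b : ℝ} (ha : 0 < a) (hab : a < b) {z : ℂ} (hz : 0 < z.im) :
    Complex.log ((csqrt ((b : ℂ) * (starRingEnd ℂ) z - 1) +
          csqrt ((a : ℂ) * (starRingEnd ℂ) z - 1)) /
        (csqrt ((b : ℂ) * (starRingEnd ℂ) z - 1) - csqrt ((a : ℂ) * (starRingEnd ℂ) z - 1)))
      = (starRingEnd ℂ) (Complex.log ((csqrt ((b : ℂ) * z - 1) + csqrt ((a : ℂ) * z - 1)) /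
        (csqrt ((b : ℂ) * z - 1) - csqrt ((a : ℂ) * z - 1)))) := by
  have hb : 0 < b := ha.trans hab
  have e1 : (a : ℂ) * (starRingEnd ℂ) z - 1 = (starRingEnd ℂ) ((a : ℂ) * z - 1) := by
    simp [Complex.conj_ofReal]
  have e2 : (b : ℂ) * (starRingEnd ℂ) z - 1 = (starRingEnd ℂ) ((b : ℂ) * z - 1) := by
    simp [Complex.conj_ofReal]
  have hima : ((a : ℂ) * z - 1).im ≠ 0 := by
    have e : ((a : ℂ) * z - 1).im = a * z.im := by simp [Complex.mul_im]
    rw [e]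
    exact ne_of_gt (mul_pos ha hz)
  have himb : ((b : ℂ) * z - 1).im ≠ 0 := by
    have e : ((b : ℂ) * z - 1).im = b * z.im := by simp [Complex.mul_im]
    rw [e]
    exact ne_of_gt (mul_pos hb hz)
  rw [e1, e2, conj_csqrt hima, conj_csqrt himb, ← map_add, ← map_sub, ← map_div₀]
  refine Complex.log_conj _ ?_
  intro h
  have h0 := (Complex.arg_eq_pi_iff.mp h).2
  have := (ratio_im_pos ha hab hz).1
  rw [h0] at this
  exact lt_irrefl 0 this

noncomputable def Rf (a b : ℝ) (z : ℂ) : ℂ :=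
  (csqrt ((b : ℂ) * z - 1) + csqrt ((a : ℂ) * z - 1)) /
    (csqrt ((b : ℂ) * z - 1) - csqrt ((a : ℂ) * z - 1))

lemma tendsto_csqrt_path_pos {r : ℝ} (hr : 0 < r) (s x : ℝ) (hrx : s * x - 1 = r) :
    Tendsto (fun ε : ℝ => csqrt ((s : ℂ) * ((x : ℂ) + (ε : ℂ) * I) - 1)) (𝓝[>] 0)
      (𝓝 ((Real.sqrt r : ℝ) : ℂ)) := by
  refine (tendsto_csqrt_pos hr s).congr fun ε => ?_
  congr 1
  rw [← hrx]
  push_cast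
  ring

lemma tendsto_csqrt_path_neg {r : ℝ} (hr : r < 0) {s : ℝ} (hs : 0 < s) (x : ℝ)
    (hrx : s * x - 1 = r) :
    Tendsto (fun ε : ℝ => csqrt ((s : ℂ) * ((x : ℂ) + (ε : ℂ) * I) - 1)) (𝓝[>] 0)
      (𝓝 (((Real.sqrt (-r) : ℝ) : ℂ) * I)) := by
  refine (tendsto_csqrt_neg hr hs).congr fun ε => ?_
  congr 2
  rw [← hrx]
  push_cast
  ring

lemma upper_case3 {a b x : ℝ} (ha : 0 < a) (hab : a < b) (hax : 1 < a * x) :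
    Tendsto (fun ε : ℝ => (Complex.log (Rf a b ((x : ℂ) + (ε : ℂ) * I))).im)
      (𝓝[>] 0) (𝓝 0) := by
  have hx : 0 < x := by nlinarith
  have hbx : 1 < b * x := by nlinarith
  have hra : 0 < a * x - 1 := by linarith
  have hrb : 0 < b * x - 1 := by linarith
  have tU := tendsto_csqrt_path_pos hrb b x rfl
  have tV := tendsto_csqrt_path_pos hra a x rfl
  set p := Real.sqrt (b * x - 1) with hp
  set q := Real.sqrt (a * x - 1) with hq
  have hqp : q < p := Real.sqrt_lt_sqrt hra.le (by nlinarith)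
  have hp0 : 0 < p := Real.sqrt_pos.mpr hrb
  have hq0 : 0 ≤ q := Real.sqrt_nonneg _
  have hne : ((p : ℝ) : ℂ) - ((q : ℝ) : ℂ) ≠ 0 := by
    rw [sub_ne_zero]
    exact_mod_cast (ne_of_lt hqp).symm
  have tR : Tendsto (fun ε : ℝ => Rf a b ((x : ℂ) + (ε : ℂ) * I)) (𝓝[>] 0)
      (𝓝 ((((p : ℝ) : ℂ) + ((q : ℝ) : ℂ)) / (((p : ℝ) : ℂ) - ((q : ℝ) : ℂ)))) :=
    (tU.add tV).div (tU.sub tV) hne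
  have hR0 : (((p : ℝ) : ℂ) + ((q : ℝ) : ℂ)) / (((p : ℝ) : ℂ) - ((q : ℝ) : ℂ))
      = (((p + q) / (p - q) : ℝ) : ℂ) := by
    push_cast
    ring
  rw [hR0] at tR
  simp only [Complex.log_im]
  have hpos : 0 < (p + q) / (p - q) := div_pos (by linarith) (by linarith)
  have harg : ContinuousAt Complex.arg ((((p + q) / (p - q) : ℝ) : ℂ)) := by
    refine Complex.continuousAt_arg ?_
    rw [Complex.mem_slitPlane_iff]
    left
    simp only [Complex.ofReal_re]
    exact hpos
  have h := harg.tendsto.comp tR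
  rwa [Complex.arg_ofReal_of_nonneg hpos.le] at h

lemma upper_case2 {a b x : ℝ} (ha : 0 < a) (hab : a < b) (hax : a * x < 1)
    (hbx : 1 < b * x) :
    Tendsto (fun ε : ℝ => (Complex.log (Rf a b ((x : ℂ) + (ε : ℂ) * I))).im)
      (𝓝[>] 0) (𝓝 (2 * Real.arctan (Real.sqrt ((1 - a * x) / (b * x - 1))))) := by
  have hra : a * x - 1 < 0 := by linarith
  have hrb : 0 < b * x - 1 := by linarith
  have tU := tendsto_csqrt_path_pos hrb b x rfl
  have tV := tendsto_csqrt_path_neg hra ha x rfl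
  rw [show -(a * x - 1) = 1 - a * x by ring] at tV
  set p := Real.sqrt (b * x - 1) with hp
  set q := Real.sqrt (1 - a * x) with hq
  have hp0 : 0 < p := Real.sqrt_pos.mpr hrb
  have hq0 : 0 < q := Real.sqrt_pos.mpr (by linarith)
  have hne : ((p : ℝ) : ℂ) - ((q : ℝ) : ℂ) * I ≠ 0 := by
    intro h
    have := congrArg Complex.re h
    simp at this
    exact hp0.ne' this
  have tR : Tendsto (fun ε : ℝ => Rf a b ((x : ℂ) + (ε : ℂ) * I)) (𝓝[>] 0)
      (𝓝 ((((p : ℝ) : ℂ) + ((q : ℝ) : ℂ) * I) / (((p : ℝ) : ℂ) - ((q : ℝ) : ℂ) * I))) :=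
    (tU.add tV).div (tU.sub tV) hne
  set R₀ : ℂ := (((p : ℝ) : ℂ) + ((q : ℝ) : ℂ) * I) / (((p : ℝ) : ℂ) - ((q : ℝ) : ℂ) * I)
    with hR₀
  set θ : ℝ := Real.arctan (q / p) with hθ
  have hθ0 : 0 < θ := by
    rw [hθ, ← Real.arctan_zero]
    exact Real.arctan_strictMono (div_pos hq0 hp0)
  have hθπ : θ < Real.pi / 2 := Real.arctan_lt_pi_div_two _
  have hcs : Real.cos θ = 1 / Real.sqrt (1 + (q / p) ^ 2) := Real.cos_arctan _
  have hsn : Real.sin θ = (q / p) / Real.sqrt (1 + (q / p) ^ 2) := Real.sin_arctan _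
  have hsq : Real.sqrt (1 + (q / p) ^ 2) ^ 2 = 1 + (q / p) ^ 2 :=
    Real.sq_sqrt (by positivity)
  have hpq : (p : ℝ) ^ 2 + q ^ 2 ≠ 0 := by positivity
  have hc2 : Real.cos (2 * θ) = (p ^ 2 - q ^ 2) / (p ^ 2 + q ^ 2) := by
    rw [Real.cos_two_mul, hcs, one_div, ← Real.rpow_natCast, ← Real.rpow_natCast]
    rw [Real.rpow_natCast, Real.rpow_natCast]
    rw [inv_pow, hsq]
    field_simp
    ring
  have hs2 : Real.sin (2 * θ) = 2 * p * q / (p ^ 2 + q ^ 2) := by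
    have hS0 : (0 : ℝ) < Real.sqrt (1 + (q / p) ^ 2) := Real.sqrt_pos.mpr (by positivity)
    rw [Real.sin_two_mul, hsn, hcs]
    rw [show 2 * (q / p / Real.sqrt (1 + (q / p) ^ 2)) * (1 / Real.sqrt (1 + (q / p) ^ 2))
        = 2 * (q / p) / (Real.sqrt (1 + (q / p) ^ 2)) ^ 2 by ring]
    rw [hsq]
    field_simp
  have hRcalc : R₀ = (((p ^ 2 - q ^ 2) / (p ^ 2 + q ^ 2) : ℝ) : ℂ)
      + (((2 * p * q) / (p ^ 2 + q ^ 2) : ℝ) : ℂ) * I := by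
    rw [hR₀, div_eq_iff hne]
    apply Complex.ext <;>
      simp only [Complex.add_re, Complex.add_im, Complex.mul_re, Complex.mul_im,
        Complex.sub_re, Complex.sub_im, Complex.ofReal_re, Complex.ofReal_im,
        Complex.I_re, Complex.I_im] <;>
      field_simp <;> ring
  have hRval : R₀ = Complex.cos ((2 * θ : ℝ) : ℂ) + Complex.sin ((2 * θ : ℝ) : ℂ) * I := by
    rw [← Complex.ofReal_cos, ← Complex.ofReal_sin, hc2, hs2, hRcalc]
  have hargR : R₀.arg = 2 * θ := by
    rw [hRval]
    exact Complex.arg_cos_add_sin_mul_I ⟨by nlinarith [Real.pi_pos], by nlinarith⟩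
  have himR : R₀.im = 2 * p * q / (p ^ 2 + q ^ 2) := by
    rw [hRcalc]
    simp only [Complex.add_im, Complex.ofReal_im, Complex.mul_im, Complex.ofReal_re,
      Complex.I_im, Complex.I_re]
    ring
  have hslit : R₀ ∈ Complex.slitPlane := by
    rw [Complex.mem_slitPlane_iff]
    right
    rw [himR]
    positivity
  have h := (Complex.continuousAt_arg hslit).tendsto.comp tR
  simp only [Complex.log_im]
  rw [hargR] at h
  have : Real.sqrt ((1 - a * x) / (b * x - 1)) = q / p := by
    rw [hq, hp, ← Real.sqrt_div (by linarith) _]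
  rw [this]
  exact h

lemma upper_case1 {a b x : ℝ} (ha : 0 < a) (hab : a < b) (hx : 0 < x) (hbx : b * x < 1) :
    Tendsto (fun ε : ℝ => (Complex.log (Rf a b ((x : ℂ) + (ε : ℂ) * I))).im)
      (𝓝[>] 0) (𝓝 Real.pi) := by
  have hb : 0 < b := ha.trans hab
  have hax : a * x < 1 := by nlinarith
  have hra : a * x - 1 < 0 := by linarith
  have hrb : b * x - 1 < 0 := by linarith
  have tU := tendsto_csqrt_path_neg hrb hb x rfl
  have tV := tendsto_csqrt_path_neg hra ha x rfl
  rw [show -(b * x - 1) = 1 - b * x by ring] at tU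
  rw [show -(a * x - 1) = 1 - a * x by ring] at tV
  set u := Real.sqrt (1 - b * x) with hu
  set v := Real.sqrt (1 - a * x) with hv
  have hu0 : 0 < u := Real.sqrt_pos.mpr (by linarith)
  have huv : u < v := Real.sqrt_lt_sqrt (by linarith) (by nlinarith)
  have hne : ((u : ℝ) : ℂ) * I - ((v : ℝ) : ℂ) * I ≠ 0 := by
    rw [show ((u : ℝ) : ℂ) * I - ((v : ℝ) : ℂ) * I = (((u - v : ℝ)) : ℂ) * I by push_cast; ring]
    refine mul_ne_zero ?_ Complex.I_ne_zero
    exact_mod_cast sub_ne_zero.mpr (ne_of_lt huv)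
  have tR : Tendsto (fun ε : ℝ => Rf a b ((x : ℂ) + (ε : ℂ) * I)) (𝓝[>] 0)
      (𝓝 ((((u : ℝ) : ℂ) * I + ((v : ℝ) : ℂ) * I) / (((u : ℝ) : ℂ) * I - ((v : ℝ) : ℂ) * I))) :=
    (tU.add tV).div (tU.sub tV) hne
  have hR0 : (((u : ℝ) : ℂ) * I + ((v : ℝ) : ℂ) * I) / (((u : ℝ) : ℂ) * I - ((v : ℝ) : ℂ) * I)
      = (((u + v) / (u - v) : ℝ) : ℂ) := by
    rw [show ((u : ℝ) : ℂ) * I + ((v : ℝ) : ℂ) * I = (((u + v : ℝ)) : ℂ) * I by push_cast; ring,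
      show ((u : ℝ) : ℂ) * I - ((v : ℝ) : ℂ) * I = (((u - v : ℝ)) : ℂ) * I by push_cast; ring,
      mul_div_mul_right _ _ Complex.I_ne_zero]
    push_cast
    ring
  rw [hR0] at tR
  have hneg : (u + v) / (u - v) < 0 :=
    div_neg_of_pos_of_neg (by linarith) (by linarith)
  simp only [Complex.log_im]
  refine (Complex.tendsto_arg_nhdsWithin_im_nonneg_of_re_neg_of_im_zero
    (z := (((u + v) / (u - v) : ℝ) : ℂ)) ?_ ?_).comp ?_
  · simp only [Complex.ofReal_re]
    exact hneg
  · exact Complex.ofReal_im _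
  · rw [tendsto_nhdsWithin_iff]
    refine ⟨tR, ?_⟩
    filter_upwards [self_mem_nhdsWithin] with ε (hε : 0 < ε)
    have hz : 0 < ((x : ℂ) + (ε : ℂ) * I).im := by simp [hε]
    exact le_of_lt (ratio_im_pos ha hab hz).1

lemma lower_of_upper {a b : ℝ} (ha : 0 < a) (hab : a < b) {x L : ℝ}
    (h : Tendsto (fun ε : ℝ => (Complex.log (Rf a b ((x : ℂ) + (ε : ℂ) * I))).im)
      (𝓝[>] 0) (𝓝 L)) :
    Tendsto (fun ε : ℝ => (Complex.log (Rf a b ((x : ℂ) - (ε : ℂ) * I))).im)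
      (𝓝[>] 0) (𝓝 (-L)) := by
  refine Tendsto.congr' ?_ h.neg
  filter_upwards [self_mem_nhdsWithin] with ε (hε : 0 < ε)
  have hz : 0 < ((x : ℂ) + (ε : ℂ) * I).im := by simp [hε]
  have hconj : ((x : ℂ) - (ε : ℂ) * I) = (starRingEnd ℂ) ((x : ℂ) + (ε : ℂ) * I) := by
    simp [Complex.ext_iff]
  rw [hconj]
  have := ratio_conj ha hab hz
  simp only [Rf]
  rw [this, Complex.conj_im]

lemma abconst (c : ℝ) (hc0 : 0 < c) (hc1 : c < 1) :
    0 < aconst c ∧ aconst c < 1 ∧ 1 < bconst c ∧ aconst c * bconst c = 1 := by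
  have hs0 : 0 < Real.sqrt c := Real.sqrt_pos.mpr hc0
  have hs1 : Real.sqrt c < 1 := by
    rw [show (1 : ℝ) = Real.sqrt 1 by simp]
    exact Real.sqrt_lt_sqrt hc0.le hc1
  rw [show (1 : ℝ) = Real.sqrt 1 by simp] at hs1
  rw [Real.sqrt_one] at hs1
  unfold aconst bconst
  refine ⟨div_pos (by linarith) (by linarith), ?_, ?_, ?_⟩
  · rw [div_lt_one (by linarith)]
    linarith
  · rw [lt_div_iff₀ (by linarith)]
    linarith
  · have h1 : (1 : ℝ) + Real.sqrt c ≠ 0 := by linarith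
    have h2 : (1 : ℝ) - Real.sqrt c ≠ 0 := by linarith
    field_simp

end PhiAux

/-- Boundary values of `Im φ′` on the real axis from above and below. -/
theorem phiDeriv_boundary_im (c : ℝ) (hc0 : 0 < c) (hc1 : c < 1) :
    (∀ x : ℝ, 0 < x → x < aconst c →
      Tendsto (fun ε : ℝ => (phiDeriv c ((x : ℂ) + (ε : ℂ) * Complex.I)).im)
        (𝓝[>] 0) (𝓝 Real.pi) ∧
      Tendsto (fun ε : ℝ => (phiDeriv c ((x : ℂ) - (ε : ℂ) * Complex.I)).im)
        (𝓝[>] 0) (𝓝 (-Real.pi))) ∧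
    (∀ x : ℝ, aconst c < x → x < bconst c →
      Tendsto (fun ε : ℝ => (phiDeriv c ((x : ℂ) + (ε : ℂ) * Complex.I)).im)
        (𝓝[>] 0) (𝓝 (2 * Real.arctan (Real.sqrt ((1 - aconst c * x) / (bconst c * x - 1))))) ∧
      Tendsto (fun ε : ℝ => (phiDeriv c ((x : ℂ) - (ε : ℂ) * Complex.I)).im)
        (𝓝[>] 0) (𝓝 (-(2 * Real.arctan (Real.sqrt ((1 - aconst c * x) / (bconst c * x - 1))))))) ∧
    (∀ x : ℝ, bconst c < x →
      Tendsto (fun ε : ℝ => (phiDeriv c ((x : ℂ) + (ε : ℂ) * Complex.I)).im)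
        (𝓝[>] 0) (𝓝 0) ∧
      Tendsto (fun ε : ℝ => (phiDeriv c ((x : ℂ) - (ε : ℂ) * Complex.I)).im)
        (𝓝[>] 0) (𝓝 (-(0 : ℝ)))) := by
  obtain ⟨ha0, ha1, hb1, hab1⟩ := PhiAux.abconst c hc0 hc1
  have hab : aconst c < bconst c := lt_trans ha1 hb1
  have hb0 : 0 < bconst c := lt_trans one_pos hb1
  refine ⟨fun x hx0 hxa => ?_, fun x hax hxb => ?_, fun x hbx => ?_⟩
  · have hbx : bconst c * x < 1 := by nlinarith
    have up := PhiAux.upper_case1 ha0 hab hx0 hbx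
    exact ⟨up, PhiAux.lower_of_upper ha0 hab up⟩
  · have h1 : aconst c * x < 1 := by nlinarith
    have h2 : 1 < bconst c * x := by nlinarith
    have up := PhiAux.upper_case2 ha0 hab h1 h2
    exact ⟨up, PhiAux.lower_of_upper ha0 hab up⟩
  · have h1 : 1 < aconst c * x := by nlinarith
    have up := PhiAux.upper_case3 ha0 hab h1
    exact ⟨up, PhiAux.lower_of_upper ha0 hab up⟩
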